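/- arXiv:1707.00575 — 3 statements merged into one kernel-verified Lean document; each statement's English description precedes it below -/
import Mathlib

section
/- Let p(x,y) ∈ ℂ[x,y] be a homogeneous polynomial of degree d, and let n be the number of points of the projective line ℙ¹(ℂ) at which p vanishes. If n ≥ 3, then the stabilizer of p under the right action of GL₂(ℂ) on ℂ[x,y] (i.e. the group of matrices g with p∘g = p) has cardinality at most n!·d. -/
open MvPolynomial

noncomputable section

/-- The right action of a `2 × 2` matrix on polynomials in two variables by
linear substitution of the variables: `p ↦ p(a x + b y, c x + d y)`. -/
def act (M : Matrix (Fin 2) (Fin 2) ℂ) (p : MvPolynomial (Fin 2) ℂ) :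
    MvPolynomial (Fin 2) ℂ :=
  bind₁ (fun i => ∑ j, M i j • X j) p

/-- The group of symmetries of `p`: the stabilizer of `p` in `GL₂(ℂ)` under the
substitution action. -/
def Stab (p : MvPolynomial (Fin 2) ℂ) : Set (GL (Fin 2) ℂ) :=
  {g | act (↑g) p = p}

/-- The set of projective roots of `p` in `ℙ¹(ℂ)`. -/
def Vp (p : MvPolynomial (Fin 2) ℂ) : Set (Projectivization ℂ (Fin 2 → ℂ)) :=
  {x | eval x.rep p = 0}

/-! ### Auxiliary lemmas -/

lemma eval_bind1 (h : Fin 2 → MvPolynomial (Fin 2) ℂ) (p : MvPolynomial (Fin 2) ℂ) (v : Fin 2 → ℂ) :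
    eval v (bind₁ h p) = eval (fun i => eval v (h i)) p :=
  eval₂Hom_bind₁ _ _ _ _

lemma eval_act (M : Matrix (Fin 2) (Fin 2) ℂ) (p : MvPolynomial (Fin 2) ℂ) (v : Fin 2 → ℂ) :
    eval v (act M p) = eval (M.mulVec v) p := by
  rw [act, eval_bind1]
  have h : (fun i => eval v (∑ j, M i j • (X j : MvPolynomial (Fin 2) ℂ))) = M.mulVec v := by
    funext i
    simp [Matrix.mulVec, dotProduct]
  rw [h]

lemma act_mul (M N : Matrix (Fin 2) (Fin 2) ℂ) (p : MvPolynomial (Fin 2) ℂ) :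
    act (M * N) p = act N (act M p) := by
  unfold act
  rw [bind₁_bind₁]
  have h : ∀ i, (bind₁ fun i => ∑ j, N i j • X j) (∑ j, M i j • (X j : MvPolynomial (Fin 2) ℂ))
      = ∑ j, (M * N) i j • X j := by
    intro i
    simp only [map_sum, map_smul, bind₁_X_right, Finset.smul_sum, smul_smul]
    rw [Finset.sum_comm]
    simp only [Matrix.mul_apply, Fin.sum_univ_two]
    module
  simp only [h]

lemma act_one (p : MvPolynomial (Fin 2) ℂ) : act 1 p = p := by
  have h : (fun i => ∑ j, (1 : Matrix (Fin 2) (Fin 2) ℂ) i j • X j)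
      = (X : Fin 2 → MvPolynomial (Fin 2) ℂ) := by
    funext i
    simp [Matrix.one_apply, ite_smul]
  rw [act, h, bind₁_X_left]
  rfl

/-- `Stab p` as a subgroup of `GL₂(ℂ)`. -/
def StabSub (p : MvPolynomial (Fin 2) ℂ) : Subgroup (GL (Fin 2) ℂ) where
  carrier := Stab p
  one_mem' := by
    show act _ p = p
    rw [Units.val_one]
    exact act_one p
  mul_mem' := by
    intro a b ha hb
    show act _ p = p
    rw [Units.val_mul, act_mul]
    rw [show act (↑a) p = p from ha]
    exact hb
  inv_mem' := by
    intro a ha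
    show act _ p = p
    have h := act_mul (↑a) (↑a⁻¹) p
    rw [← Units.val_mul, mul_inv_cancel, Units.val_one, act_one,
      show act (↑a) p = p from ha] at h
    exact h.symm

lemma gl_mulVec_injective (g : GL (Fin 2) ℂ) :
    Function.Injective ((↑g : Matrix (Fin 2) (Fin 2) ℂ).mulVecLin) := by
  have h : Function.LeftInverse ((↑g⁻¹ : Matrix (Fin 2) (Fin 2) ℂ).mulVecLin)
      ((↑g : Matrix (Fin 2) (Fin 2) ℂ).mulVecLin) := by
    intro x
    simp only [Matrix.mulVecLin_apply, Matrix.mulVec_mulVec]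
    rw [show (↑g⁻¹ : Matrix (Fin 2) (Fin 2) ℂ) * ↑g = 1 by
      rw [← Units.val_mul, inv_mul_cancel, Units.val_one]]
    simp
  exact h.injective

/-- The induced map on the projective line. -/
def pmap (g : GL (Fin 2) ℂ) :
    Projectivization ℂ (Fin 2 → ℂ) → Projectivization ℂ (Fin 2 → ℂ) :=
  Projectivization.map ((↑g : Matrix (Fin 2) (Fin 2) ℂ).mulVecLin) (gl_mulVec_injective g)

lemma mulVec_ne_zero (g : GL (Fin 2) ℂ) {v : Fin 2 → ℂ} (hv : v ≠ 0) :
    (↑g : Matrix (Fin 2) (Fin 2) ℂ).mulVec v ≠ 0 := by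
  intro h
  apply hv
  have h2 := gl_mulVec_injective g (a₁ := v) (a₂ := 0)
  simp only [Matrix.mulVecLin_apply, map_zero] at h2
  exact h2 (by simpa using h)

lemma mk_congr {v w : Fin 2 → ℂ} (hv : v ≠ 0) (h : v = w) :
    Projectivization.mk ℂ v hv = Projectivization.mk ℂ w (h ▸ hv) := by subst h; rfl

lemma pmap_mk (g : GL (Fin 2) ℂ) (v : Fin 2 → ℂ) (hv : v ≠ 0) :
    pmap g (Projectivization.mk ℂ v hv) =
      Projectivization.mk ℂ ((↑g : Matrix (Fin 2) (Fin 2) ℂ).mulVec v) (mulVec_ne_zero g hv) :=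
  Projectivization.map_mk _ _ v hv

lemma pmap_pmap (g h : GL (Fin 2) ℂ) (x : Projectivization ℂ (Fin 2 → ℂ)) :
    pmap g (pmap h x) = pmap (g * h) x := by
  induction x using Projectivization.ind with
  | h v hv =>
    rw [pmap_mk, pmap_mk, pmap_mk]
    exact mk_congr _ (by rw [Matrix.mulVec_mulVec, Units.val_mul])

lemma pmap_one (x : Projectivization ℂ (Fin 2 → ℂ)) : pmap 1 x = x := by
  induction x using Projectivization.ind with
  | h v hv =>
    rw [pmap_mk]
    exact mk_congr _ (by simp)

lemma eval_smul_homog {p : MvPolynomial (Fin 2) ℂ} {d : ℕ} (hp : p.IsHomogeneous d)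
    (c : ℂ) (w : Fin 2 → ℂ) : eval (c • w) p = c ^ d * eval w p := by
  rw [eval_eq, eval_eq, Finset.mul_sum]
  refine Finset.sum_congr rfl fun m hm => ?_
  have hdeg : m.degree = d := by
    by_contra h
    exact (mem_support_iff.mp hm) (hp.coeff_eq_zero h)
  have h : ∏ i ∈ m.support, (c • w) i ^ m i = c ^ d * ∏ i ∈ m.support, w i ^ m i := by
    rw [← hdeg, Finsupp.degree]
    simp only [Pi.smul_apply, smul_eq_mul, mul_pow]
    rw [Finset.prod_mul_distrib, Finset.prod_pow_eq_pow_sum]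
    rfl
  rw [h]; ring

lemma mem_Vp_mk {p : MvPolynomial (Fin 2) ℂ} {d : ℕ} (hp : p.IsHomogeneous d)
    {v : Fin 2 → ℂ} (hv : v ≠ 0) :
    Projectivization.mk ℂ v hv ∈ Vp p ↔ eval v p = 0 := by
  obtain ⟨a, ha⟩ := Projectivization.exists_smul_eq_mk_rep ℂ v hv
  have h1 : eval (Projectivization.mk ℂ v hv).rep p = (a : ℂ) ^ d * eval v p := by
    rw [← ha, Units.smul_def, eval_smul_homog hp]
  constructor
  · intro h
    rcases mul_eq_zero.mp (h1.symm.trans h) with h' | h'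
    · exact absurd h' (pow_ne_zero d a.ne_zero)
    · exact h'
  · intro h
    show eval _ p = 0
    rw [h1, h, mul_zero]

lemma pmap_mem_Vp {p : MvPolynomial (Fin 2) ℂ} {d : ℕ} (hp : p.IsHomogeneous d)
    {g : GL (Fin 2) ℂ} (hg : g ∈ Stab p)
    {x : Projectivization ℂ (Fin 2 → ℂ)} (hx : x ∈ Vp p) : pmap g x ∈ Vp p := by
  induction x using Projectivization.ind with
  | h v hv =>
    rw [pmap_mk, mem_Vp_mk hp]
    rw [mem_Vp_mk hp] at hx
    rw [← eval_act, show act (↑g) p = p from hg]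
    exact hx

/-- The permutation of the root set induced by an element of the stabilizer. -/
def toPerm {p : MvPolynomial (Fin 2) ℂ} {d : ℕ} (hp : p.IsHomogeneous d)
    (g : ↥(StabSub p)) : Equiv.Perm ↥(Vp p) where
  toFun x := ⟨pmap ↑g ↑x, pmap_mem_Vp hp g.2 x.2⟩
  invFun x := ⟨pmap ↑(g⁻¹) ↑x, pmap_mem_Vp hp (g⁻¹).2 x.2⟩
  left_inv x := by
    apply Subtype.ext
    show pmap ↑(g⁻¹) (pmap ↑g ↑x) = ↑x
    rw [pmap_pmap]
    have h : (↑(g⁻¹) : GL (Fin 2) ℂ) * ↑g = 1 := by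
      rw [show (↑(g⁻¹) : GL (Fin 2) ℂ) = (↑g)⁻¹ by simp, inv_mul_cancel]
    rw [h, pmap_one]
  right_inv x := by
    apply Subtype.ext
    show pmap ↑g (pmap ↑(g⁻¹) ↑x) = ↑x
    rw [pmap_pmap]
    have h : (↑g : GL (Fin 2) ℂ) * ↑(g⁻¹) = 1 := by
      rw [show (↑(g⁻¹) : GL (Fin 2) ℂ) = (↑g)⁻¹ by simp, mul_inv_cancel]
    rw [h, pmap_one]

/-- The homomorphism from the stabilizer to permutations of the root set. -/
def stabHom {p : MvPolynomial (Fin 2) ℂ} {d : ℕ} (hp : p.IsHomogeneous d) :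
    ↥(StabSub p) →* Equiv.Perm ↥(Vp p) where
  toFun := toPerm hp
  map_one' := by
    ext x
    show pmap ↑(1 : ↥(StabSub p)) ↑x = ↑x
    rw [OneMemClass.coe_one, pmap_one]
  map_mul' g h := by
    ext x
    show pmap ↑(g * h) ↑x = pmap ↑g (pmap ↑h ↑x)
    rw [pmap_pmap]
    norm_cast

lemma det_ne {v w : Fin 2 → ℂ} (hv : v ≠ 0) (h : ¬ ∃ c : ℂ, c • v = w) :
    v 0 * w 1 - v 1 * w 0 ≠ 0 := by
  intro hD
  apply h
  by_cases h0 : v 0 = 0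
  · have hv1 : v 1 ≠ 0 := by
      intro h1; apply hv; funext i; fin_cases i <;> simp [h0, h1]
    have hw0 : w 0 = 0 := by
      have h2 : v 1 * w 0 = 0 := by linear_combination -hD + w 1 * h0
      exact (mul_eq_zero.mp h2).resolve_left hv1
    refine ⟨w 1 / v 1, ?_⟩
    funext i; fin_cases i <;> simp [h0, hw0] <;> field_simp
  · refine ⟨w 0 / v 0, ?_⟩
    funext i
    fin_cases i <;> simp <;> field_simp
    linear_combination -hD

lemma sys_zero {v1 v2 : Fin 2 → ℂ} (hD : v1 0 * v2 1 - v1 1 * v2 0 ≠ 0)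
    {α β : ℂ} (e0 : α * v1 0 + β * v2 0 = 0) (e1 : α * v1 1 + β * v2 1 = 0) :
    α = 0 ∧ β = 0 := by
  constructor
  · have h : α * (v1 0 * v2 1 - v1 1 * v2 0) = 0 := by linear_combination v2 1 * e0 - v2 0 * e1
    exact (mul_eq_zero.mp h).resolve_right hD
  · have h : β * (v1 0 * v2 1 - v1 1 * v2 0) = 0 := by linear_combination v1 0 * e1 - v1 1 * e0
    exact (mul_eq_zero.mp h).resolve_right hD

lemma sys_zero' {v1 v2 : Fin 2 → ℂ} (hD : v1 0 * v2 1 - v1 1 * v2 0 ≠ 0)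
    {α β : ℂ} (e0 : α * v1 0 + β * v1 1 = 0) (e1 : α * v2 0 + β * v2 1 = 0) :
    α = 0 ∧ β = 0 := by
  constructor
  · have h : α * (v1 0 * v2 1 - v1 1 * v2 0) = 0 := by linear_combination v2 1 * e0 - v1 1 * e1
    exact (mul_eq_zero.mp h).resolve_right hD
  · have h : β * (v1 0 * v2 1 - v1 1 * v2 0) = 0 := by linear_combination v1 0 * e1 - v2 0 * e0
    exact (mul_eq_zero.mp h).resolve_right hD

lemma eig3 {M : Matrix (Fin 2) (Fin 2) ℂ} {v1 v2 v3 : Fin 2 → ℂ}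
    (hv1 : v1 ≠ 0)
    (h12 : ¬ ∃ c : ℂ, c • v1 = v2) (h13 : ¬ ∃ c : ℂ, c • v1 = v3) (h23 : ¬ ∃ c : ℂ, c • v2 = v3)
    {μ1 μ2 μ3 : ℂ} (e1 : M.mulVec v1 = μ1 • v1) (e2 : M.mulVec v2 = μ2 • v2)
    (e3 : M.mulVec v3 = μ3 • v3) :
    M = μ1 • (1 : Matrix (Fin 2) (Fin 2) ℂ) := by
  have hD : v1 0 * v2 1 - v1 1 * v2 0 ≠ 0 := det_ne hv1 h12
  have E1 : ∀ i, M i 0 * v1 0 + M i 1 * v1 1 = μ1 * v1 i := by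
    intro i
    have h := congrFun e1 i
    simpa [Matrix.mulVec, dotProduct, Fin.sum_univ_two] using h
  have E2 : ∀ i, M i 0 * v2 0 + M i 1 * v2 1 = μ2 * v2 i := by
    intro i
    have h := congrFun e2 i
    simpa [Matrix.mulVec, dotProduct, Fin.sum_univ_two] using h
  have E3 : ∀ i, M i 0 * v3 0 + M i 1 * v3 1 = μ3 * v3 i := by
    intro i
    have h := congrFun e3 i
    simpa [Matrix.mulVec, dotProduct, Fin.sum_univ_two] using h
  set D := v1 0 * v2 1 - v1 1 * v2 0 with hDdef
  set a := (v3 0 * v2 1 - v3 1 * v2 0) / D with hadef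
  set b := (v1 0 * v3 1 - v1 1 * v3 0) / D with hbdef
  have hv3 : ∀ i, v3 i = a * v1 i + b * v2 i := by
    intro i
    rw [hadef, hbdef]
    fin_cases i <;> simp only [Fin.zero_eta, Fin.mk_one, Fin.isValue] <;> field_simp <;> rw [hDdef] <;> ring
  have ha : a ≠ 0 := by
    intro h
    apply h23
    refine ⟨b, funext fun i => ?_⟩
    have h2 := hv3 i
    rw [h, zero_mul, zero_add] at h2
    simp [h2.symm]
  have hb : b ≠ 0 := by
    intro h
    apply h13
    refine ⟨a, funext fun i => ?_⟩
    have h2 := hv3 i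
    rw [h, zero_mul, add_zero] at h2
    simp [h2.symm]
  have F : ∀ i, a * μ1 * v1 i + b * μ2 * v2 i = μ3 * (a * v1 i + b * v2 i) := by
    intro i
    linear_combination (-a) * E1 i + (-b) * E2 i + E3 i + (- M i 0) * hv3 0 +
      (- M i 1) * hv3 1 + μ3 * hv3 i
  have key := sys_zero hD (α := a * (μ1 - μ3)) (β := b * (μ2 - μ3))
    (by linear_combination F 0) (by linear_combination F 1)
  have hμ13 : μ1 = μ3 := sub_eq_zero.mp ((mul_eq_zero.mp key.1).resolve_left ha)
  have hμ23 : μ2 = μ3 := sub_eq_zero.mp ((mul_eq_zero.mp key.2).resolve_left hb)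
  have E2' : ∀ i, M i 0 * v2 0 + M i 1 * v2 1 = μ1 * v2 i := by
    intro i; rw [hμ13, ← hμ23]; exact E2 i
  have row0 := sys_zero' hD (α := M 0 0 - μ1) (β := M 0 1)
    (by linear_combination E1 0) (by linear_combination E2' 0)
  have row1 := sys_zero' hD (α := M 1 0) (β := M 1 1 - μ1)
    (by linear_combination E1 1) (by linear_combination E2' 1)
  ext i j
  fin_cases i <;> fin_cases j <;>
    simp [Matrix.one_apply, sub_eq_zero.mp row0.1, row0.2, row1.1, sub_eq_zero.mp row1.2]

theorem stmt0 (p : MvPolynomial (Fin 2) ℂ) (d : ℕ) (hp : p.IsHomogeneous d)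
    (n : ℕ) (hn : n = (Vp p).ncard) (h3 : 3 ≤ n) :
    (Stab p).Finite ∧ (Stab p).ncard ≤ n.factorial * d := by
  classical
  -- the root set is finite
  have hVfin : (Vp p).Finite := by
    by_contra h
    rw [Set.Infinite.ncard h] at hn
    omega
  -- `p` is nonzero
  have hp0 : p ≠ 0 := by
    intro hzero
    apply hVfin.not_infinite
    apply Set.infinite_of_injective_forall_mem
      (f := fun c : ℂ => Projectivization.mk ℂ ![1, c] (by
        intro h
        have := congrFun h 0
        simp at this))
    · intro c1 c2 h
      rw [Projectivization.mk_eq_mk_iff'] at h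
      obtain ⟨a, ha⟩ := h
      have h0 := congrFun ha 0
      have h1 := congrFun ha 1
      simp at h0 h1
      rw [h0, one_mul] at h1
      exact h1.symm
    · intro c
      show eval _ p = 0
      rw [hzero, map_zero]
  -- the degree is positive
  have hd : 1 ≤ d := by
    by_contra h
    have hd0 : d = 0 := by omega
    subst hd0
    have hne : (Vp p).Nonempty := by
      rw [Set.nonempty_iff_ne_empty]
      intro he
      rw [he, Set.ncard_empty] at hn
      omega
    obtain ⟨x, hx⟩ := hne
    apply hp0
    apply MvPolynomial.funext (q := 0)
    intro w
    rw [map_zero]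
    have h1 : eval ((0:ℂ) • w) p = (0:ℂ) ^ 0 * eval w p := eval_smul_homog hp 0 w
    have h2 : eval ((0:ℂ) • x.rep) p = (0:ℂ) ^ 0 * eval x.rep p := eval_smul_homog hp 0 x.rep
    simp only [zero_smul, pow_zero, one_mul] at h1 h2
    rw [← h1, h2]
    exact hx
  -- extract three distinct roots
  have hcard : 2 < hVfin.toFinset.card := by
    rw [← Set.ncard_eq_toFinset_card (Vp p) hVfin]
    omega
  obtain ⟨x1, x2, x3, hx1, hx2, hx3, h12, h13, h23⟩ := Finset.two_lt_card_iff.mp hcard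
  rw [Set.Finite.mem_toFinset] at hx1 hx2 hx3
  have nonprop : ∀ (x y : Projectivization ℂ (Fin 2 → ℂ)), x ≠ y →
      ¬ ∃ c : ℂ, c • x.rep = y.rep := by
    rintro x y hxy ⟨c, hc⟩
    apply hxy
    have hc0 : c ≠ 0 := by
      rintro rfl
      exact y.rep_nonzero (by simpa using hc.symm)
    rw [← Projectivization.mk_rep x, ← Projectivization.mk_rep y,
      Projectivization.mk_eq_mk_iff']
    refine ⟨c⁻¹, ?_⟩
    rw [← hc, smul_smul, inv_mul_cancel₀ hc0, one_smul]
  -- elements of the kernel are scalar matrices with `c ^ d = 1`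
  have hker : ∀ k : ↥(StabSub p), k ∈ (stabHom hp).ker →
      ∃ c : ℂ, ((k : GL (Fin 2) ℂ) : Matrix (Fin 2) (Fin 2) ℂ) = c • 1 ∧ c ^ d = 1 := by
    intro k hk
    rw [MonoidHom.mem_ker] at hk
    have hfix : ∀ (x : Projectivization ℂ (Fin 2 → ℂ)), x ∈ Vp p →
        ∃ μ : ℂ, ((k : GL (Fin 2) ℂ) : Matrix (Fin 2) (Fin 2) ℂ).mulVec x.rep = μ • x.rep := by
      intro x hx
      have h0 : (stabHom hp k) ⟨x, hx⟩ = ⟨x, hx⟩ := by rw [hk]; rfl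
      have h1 : pmap (↑k) x = x := congrArg Subtype.val h0
      have h2 : Projectivization.mk ℂ (((k : GL (Fin 2) ℂ) : Matrix (Fin 2) (Fin 2) ℂ).mulVec x.rep)
            (mulVec_ne_zero _ x.rep_nonzero)
          = Projectivization.mk ℂ x.rep x.rep_nonzero := by
        rw [← pmap_mk, Projectivization.mk_rep, h1]
        exact x.rep_nonzero
      rw [Projectivization.mk_eq_mk_iff'] at h2
      obtain ⟨a, ha⟩ := h2
      exact ⟨a, ha.symm⟩
    obtain ⟨μ1, hμ1⟩ := hfix x1 hx1
    obtain ⟨μ2, hμ2⟩ := hfix x2 hx2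
    obtain ⟨μ3, hμ3⟩ := hfix x3 hx3
    have hM := eig3 x1.rep_nonzero (nonprop _ _ h12) (nonprop _ _ h13) (nonprop _ _ h23)
      hμ1 hμ2 hμ3
    refine ⟨μ1, hM, ?_⟩
    obtain ⟨w, hw⟩ : ∃ w, eval w p ≠ 0 := by
      by_contra h
      push_neg at h
      exact hp0 (MvPolynomial.funext fun x => by rw [map_zero]; exact h x)
    have hkStab : act ((k : GL (Fin 2) ℂ) : Matrix (Fin 2) (Fin 2) ℂ) p = p := k.2
    have heq := eval_act ((k : GL (Fin 2) ℂ) : Matrix (Fin 2) (Fin 2) ℂ) p w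
    rw [hkStab, hM, Matrix.smul_mulVec, Matrix.one_mulVec, eval_smul_homog hp] at heq
    have hfac : (μ1 ^ d - 1) * eval w p = 0 := by linear_combination -heq
    have hz := (mul_eq_zero.mp hfac).resolve_right hw
    linear_combination hz
  -- the set of d-th roots of unity is finite of cardinality at most d
  have hsub : {c : ℂ | c ^ d = 1} ⊆ ↑(Polynomial.nthRoots d (1 : ℂ)).toFinset := by
    intro c hc
    simp only [Finset.coe_sort_coe, Multiset.mem_toFinset, Finset.mem_coe]
    rw [Polynomial.mem_nthRoots (by omega : 0 < d)]
    exact hc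
  have hSfin : {c : ℂ | c ^ d = 1}.Finite :=
    Set.Finite.subset (Finset.finite_toSet _) hsub
  have hScard : {c : ℂ | c ^ d = 1}.ncard ≤ d := by
    calc {c : ℂ | c ^ d = 1}.ncard
        ≤ (↑(Polynomial.nthRoots d (1 : ℂ)).toFinset : Set ℂ).ncard :=
          Set.ncard_le_ncard hsub (Finset.finite_toSet _)
      _ = (Polynomial.nthRoots d (1 : ℂ)).toFinset.card := Set.ncard_coe_finset _
      _ ≤ Multiset.card (Polynomial.nthRoots d (1 : ℂ)) := Multiset.toFinset_card_le _
      _ ≤ d := Polynomial.card_nthRoots d 1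
  -- injection of the kernel into the roots of unity
  have hmem : ∀ k : ↥((stabHom hp).ker),
      ((((k : ↥(StabSub p)) : GL (Fin 2) ℂ) : Matrix (Fin 2) (Fin 2) ℂ) 0 0) ∈
        {c : ℂ | c ^ d = 1} := by
    intro k
    obtain ⟨c, hc, hcd⟩ := hker ↑k k.2
    simp only [Set.mem_setOf_eq, hc, Matrix.smul_apply, Matrix.one_apply_eq, smul_eq_mul,
      mul_one]
    exact hcd
  set F : ↥((stabHom hp).ker) → ↥{c : ℂ | c ^ d = 1} := fun k =>
    ⟨_, hmem k⟩ with hF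
  have hFinj : Function.Injective F := by
    intro k1 k2 h
    obtain ⟨c1, hc1, -⟩ := hker ↑k1 k1.2
    obtain ⟨c2, hc2, -⟩ := hker ↑k2 k2.2
    have hval := congrArg Subtype.val h
    rw [hF] at hval
    simp only [hc1, hc2, Matrix.smul_apply, Matrix.one_apply_eq, smul_eq_mul, mul_one] at hval
    exact Subtype.ext (Subtype.ext (Units.ext (by rw [hc1, hc2, hval])))
  haveI : Finite ↥{c : ℂ | c ^ d = 1} := hSfin.to_subtype
  haveI hKfin : Finite ↥((stabHom hp).ker) := Finite.of_injective F hFinj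
  haveI : Finite ↥(Vp p) := hVfin.to_subtype
  haveI : Finite (Equiv.Perm ↥(Vp p)) := by infer_instance
  haveI : Finite ↥(stabHom hp).range := by infer_instance
  haveI hQfin : Finite (↥(StabSub p) ⧸ (stabHom hp).ker) :=
    Finite.of_equiv ↥(stabHom hp).range (QuotientGroup.quotientKerEquivRange (stabHom hp)).symm
  haveI hGfin : Finite ↥(StabSub p) :=
    Finite.of_equiv ((↥(StabSub p) ⧸ (stabHom hp).ker) × ↥((stabHom hp).ker))
      Subgroup.groupEquivQuotientProdSubgroup.symm
  have hStabFin : (Stab p).Finite := by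
    rw [← Set.finite_coe_iff]
    exact hGfin
  refine ⟨hStabFin, ?_⟩
  have hcardeq : (Stab p).ncard = Nat.card ↥(StabSub p) := by
    rw [← Nat.card_coe_set_eq]
    rfl
  rw [hcardeq, Subgroup.card_eq_card_quotient_mul_card_subgroup (stabHom hp).ker]
  have h1 : Nat.card (↥(StabSub p) ⧸ (stabHom hp).ker) ≤ n.factorial := by
    haveI := Fintype.ofFinite ↥(Vp p)
    calc Nat.card (↥(StabSub p) ⧸ (stabHom hp).ker)
        = Nat.card ↥(stabHom hp).range :=
          Nat.card_congr (QuotientGroup.quotientKerEquivRange (stabHom hp)).toEquiv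
      _ ≤ Nat.card (Equiv.Perm ↥(Vp p)) :=
          Nat.card_le_card_of_injective _ Subtype.coe_injective
      _ = (Fintype.card ↥(Vp p)).factorial := by
          rw [Nat.card_eq_fintype_card, Fintype.card_perm]
      _ = n.factorial := by
          rw [← Nat.card_eq_fintype_card, Nat.card_coe_set_eq, ← hn]
  have h2 : Nat.card ↥((stabHom hp).ker) ≤ d := by
    calc Nat.card ↥((stabHom hp).ker)
        ≤ Nat.card ↥{c : ℂ | c ^ d = 1} := Nat.card_le_card_of_injective F hFinj
      _ = {c : ℂ | c ^ d = 1}.ncard := Nat.card_coe_set_eq _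
      _ ≤ d := hScard
  exact Nat.mul_le_mul h1 h2
end
end

section
/- Let q > 2 be a prime power and let C ⊆ 𝔽_q^n be a linear code all of whose codewords have even weight. Let x, c ∈ C with c of weight two and support {i, j}. Then there exists λ ∈ 𝔽_q such that (x_i, x_j) = (λ c_i, λ c_j). -/
open MvPolynomial
open scoped Classical

noncomputable section

/-- The Hamming weight of a vector: the number of nonzero coordinates. -/
def wt {I F : Type*} [Fintype I] [Zero F] (c : I → F) : ℕ :=
  (Finset.univ.filter fun i => c i ≠ 0).card

theorem stmt3 {F : Type*} [Field F] [Fintype F] (hq : 2 < Fintype.card F)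
    {n : ℕ} (C : Submodule F (Fin n → F))
    (heven : ∀ c ∈ C, 2 ∣ wt c)
    (x c : Fin n → F) (hx : x ∈ C) (hc : c ∈ C)
    (i j : Fin n) (hij : i ≠ j) (hci : c i ≠ 0) (hcj : c j ≠ 0)
    (hsupp : ∀ k, k ≠ i → k ≠ j → c k = 0) :
    ∃ l : F, x i = l * c i ∧ x j = l * c j := by
  set l₁ : F := x i * (c i)⁻¹ with hl₁
  set l₂ : F := x j * (c j)⁻¹ with hl₂
  by_cases h12 : l₁ = l₂
  · refine ⟨l₁, ?_, ?_⟩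
    · rw [hl₁, inv_mul_cancel_right₀ hci]
    · rw [h12]; rw [hl₂, inv_mul_cancel_right₀ hcj]
  -- choose μ different from l₁ and l₂
  obtain ⟨μ, hμ⟩ : ∃ μ : F, μ ∉ ({l₁, l₂} : Finset F) := by
    by_contra h
    push_neg at h
    have : (Finset.univ : Finset F) ⊆ {l₁, l₂} := fun a _ => h a
    have hcard := Finset.card_le_card this
    have h2 : ({l₁, l₂} : Finset F).card ≤ 2 := Finset.card_insert_le _ _ |>.trans (by simp)
    simp [Finset.card_univ] at hcard
    omega
  have hμ1 : μ ≠ l₁ := by simp at hμ; exact hμ.1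
  have hμ2 : μ ≠ l₂ := by simp at hμ; exact hμ.2
  set z₁ : Fin n → F := x - l₁ • c with hz₁
  set z₂ : Fin n → F := x - μ • c with hz₂
  have hz₁C : z₁ ∈ C := C.sub_mem hx (C.smul_mem _ hc)
  have hz₂C : z₂ ∈ C := C.sub_mem hx (C.smul_mem _ hc)
  have hz₁i : z₁ i = 0 := by
    simp only [hz₁, Pi.sub_apply, Pi.smul_apply, smul_eq_mul, hl₁]
    field_simp
    simp
  have hz₁j : z₁ j ≠ 0 := by
    simp only [hz₁, Pi.sub_apply, Pi.smul_apply, smul_eq_mul]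
    intro h
    apply h12
    have : x j = l₁ * c j := sub_eq_zero.mp h
    rw [hl₂, this]
    field_simp
  have hz₂i : z₂ i ≠ 0 := by
    simp only [hz₂, Pi.sub_apply, Pi.smul_apply, smul_eq_mul]
    intro h
    apply hμ1
    have : x i = μ * c i := sub_eq_zero.mp h
    rw [hl₁, this]
    field_simp
  have hz₂j : z₂ j ≠ 0 := by
    simp only [hz₂, Pi.sub_apply, Pi.smul_apply, smul_eq_mul]
    intro h
    apply hμ2
    have : x j = μ * c j := sub_eq_zero.mp h
    rw [hl₂, this]
    field_simp
  have hset : (Finset.univ.filter fun k => z₂ k ≠ 0)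
      = insert i (Finset.univ.filter fun k => z₁ k ≠ 0) := by
    ext k
    simp only [Finset.mem_filter, Finset.mem_univ, true_and, Finset.mem_insert]
    by_cases hki : k = i
    · subst hki; simp [hz₂i]
    · by_cases hkj : k = j
      · subst hkj; simp [hz₂j, hz₁j, hki]
      · have hck : c k = 0 := hsupp k hki hkj
        simp [hz₁, hz₂, hck, hki]
  have hii : i ∉ (Finset.univ.filter fun k => z₁ k ≠ 0) := by
    simp [hz₁i]
  have hwt : wt z₂ = wt z₁ + 1 := by
    unfold wt
    rw [hset, Finset.card_insert_of_notMem hii]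
  have h1 := heven z₁ hz₁C
  have h2 := heven z₂ hz₂C
  omega
end
end

section
/- Let q ≠ 2 be a prime power and C ⊆ 𝔽_q^n a linear code of even length n whose weight enumerator equals (x² + a y²)^{n/2} for some nonzero real a. Then a = q−1 and C is monomially equivalent to the direct sum of n/2 copies of the code ⟨(1,1)⟩ ⊆ 𝔽_q². -/
open MvPolynomial
open scoped Classical

noncomputable section

/-- The weight enumerator `w_C(x, y) = ∑_{c ∈ C} x^(n - wt c) * y^(wt c)` of a code
`C ⊆ F^n`, viewed as a complex polynomial in the two variables `X 0`, `X 1`. -/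
def we {F : Type*} [Fintype F] [Field F] {n : ℕ} (C : Set (Fin n → F)) :
    MvPolynomial (Fin 2) ℂ :=
  ∑ c : C, X 0 ^ (n - wt c.1) * X 1 ^ wt c.1

/-- The direct sum of `m` copies of the code `⟨(1,1)⟩ ⊆ F²`, realized inside
`F^(2m)` as the span of the vectors `e_{2k} + e_{2k+1}`, `k = 0, …, m-1`. -/
def pairCode (F : Type*) [Field F] (m : ℕ) : Submodule F (Fin (2 * m) → F) :=
  Submodule.span F (Set.range fun k : Fin m =>
    (Pi.single (⟨2 * (k : ℕ), by omega⟩ : Fin (2 * m)) 1 +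
      Pi.single (⟨2 * (k : ℕ) + 1, by omega⟩ : Fin (2 * m)) (1 : F)))

def fsupp {n : ℕ} {F : Type*} [Zero F] (v : Fin n → F) : Finset (Fin n) :=
  Finset.univ.filter fun i => v i ≠ 0

lemma mem_fsupp {n : ℕ} {F : Type*} [Zero F] {v : Fin n → F} {i : Fin n} :
    i ∈ fsupp v ↔ v i ≠ 0 := by simp [fsupp]

lemma wt_eq_fsupp {n : ℕ} {F : Type*} [Zero F] (v : Fin n → F) : wt v = (fsupp v).card := rfl

lemma wt_eq_zero {n : ℕ} {F : Type*} [Zero F] {v : Fin n → F} (h : wt v = 0) : v = 0 := by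
  funext i
  have := Finset.card_eq_zero.mp h
  by_contra hi
  have : i ∈ fsupp v := mem_fsupp.mpr hi
  rw [wt_eq_fsupp] at h
  rw [Finset.card_eq_zero.mp h] at this
  simp at this

lemma fsupp_smul {n : ℕ} {F : Type*} [Field F] {v : Fin n → F} {l : F} (hl : l ≠ 0) :
    fsupp (l • v) = fsupp v := by
  ext i
  simp [mem_fsupp, hl]

lemma pair_mem_of_card_two {α : Type*} [DecidableEq α] {s : Finset α} (hs : s.card = 2) {i : α}
    (hi : i ∈ s) : ∃ j, j ≠ i ∧ s = {i, j} := by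
  obtain ⟨x, y, hxy, rfl⟩ := Finset.card_eq_two.mp hs
  simp only [Finset.mem_insert, Finset.mem_singleton] at hi
  rcases hi with rfl | rfl
  · exact ⟨y, fun h => hxy h.symm, rfl⟩
  · exact ⟨x, fun h => hxy h, by rw [Finset.pair_comm]⟩

section Comb
variable {F : Type*} [Field F] [Fintype F] {n : ℕ} {C : Submodule F (Fin n → F)}

lemma eq_or_disjoint (hq3 : 3 ≤ Fintype.card F)
    (hno3 : ∀ v ∈ C, wt v ≠ 3)
    {c d : Fin n → F} (hc : c ∈ C) (hd : d ∈ C) (h2c : wt c = 2) (h2d : wt d = 2) :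
    fsupp c = fsupp d ∨ Disjoint (fsupp c) (fsupp d) := by
  by_contra h
  push_neg at h
  obtain ⟨hne, hndis⟩ := h
  obtain ⟨i, hic, hid⟩ := Finset.not_disjoint_iff.mp hndis
  rw [wt_eq_fsupp] at h2c h2d
  obtain ⟨j, hji, hcs⟩ := pair_mem_of_card_two h2c hic
  obtain ⟨k, hki, hds⟩ := pair_mem_of_card_two h2d hid
  have hjk : j ≠ k := by
    intro hjk
    exact hne (by rw [hcs, hds, hjk])
  have hci : c i ≠ 0 := mem_fsupp.mp hic
  have hdi : d i ≠ 0 := mem_fsupp.mp hid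
  have hcj : c j ≠ 0 := mem_fsupp.mp (by rw [hcs]; simp)
  have hdk : d k ≠ 0 := mem_fsupp.mp (by rw [hds]; simp)
  have hck : c k = 0 := by
    by_contra h'
    have : k ∈ fsupp c := mem_fsupp.mpr h'
    rw [hcs] at this
    simp only [Finset.mem_insert, Finset.mem_singleton] at this
    rcases this with h'' | h''
    · exact hki h''
    · exact hjk h''.symm
  have hdj : d j = 0 := by
    by_contra h'
    have : j ∈ fsupp d := mem_fsupp.mpr h'
    rw [hds] at this
    simp only [Finset.mem_insert, Finset.mem_singleton] at this
    rcases this with h'' | h''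
    · exact hji h''
    · exact hjk h''
  -- choose μ
  obtain ⟨μ, hμ⟩ : ∃ μ : F, μ ∉ (insert (0:F) ({-(c i)/(d i)} : Finset F)) := by
    by_contra h'
    push_neg at h'
    have hsub : (Finset.univ : Finset F) ⊆ insert (0:F) ({-(c i)/(d i)} : Finset F) :=
      fun x _ => h' x
    have h1 := Finset.card_le_card hsub
    have h2 : (insert (0:F) ({-(c i)/(d i)} : Finset F)).card ≤ 2 :=
      le_trans (Finset.card_insert_le _ _) (by simp)
    rw [Finset.card_univ] at h1
    omega
  simp only [Finset.mem_insert, Finset.mem_singleton, not_or] at hμ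
  obtain ⟨hμ0, hμ1⟩ := hμ
  set e : Fin n → F := c + μ • d with he
  have heC : e ∈ C := C.add_mem hc (C.smul_mem μ hd)
  have hei : e i ≠ 0 := by
    intro h'
    apply hμ1
    have h'' : c i + μ * d i = 0 := by simpa [he] using h'
    field_simp
    linear_combination h''
  have hej : e j ≠ 0 := by
    simp only [he, Pi.add_apply, Pi.smul_apply, smul_eq_mul, hdj, mul_zero, add_zero]
    exact hcj
  have hek : e k ≠ 0 := by
    simp only [he, Pi.add_apply, Pi.smul_apply, smul_eq_mul, hck, zero_add]
    exact mul_ne_zero hμ0 hdk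
  have hsuppe : fsupp e = {i, j, k} := by
    ext l
    simp only [mem_fsupp, Finset.mem_insert, Finset.mem_singleton]
    constructor
    · intro hl
      by_contra h'
      push_neg at h'
      obtain ⟨h1, h2, h3⟩ := h'
      have hcl : c l = 0 := by
        by_contra h''
        have : l ∈ fsupp c := mem_fsupp.mpr h''
        rw [hcs] at this
        simp only [Finset.mem_insert, Finset.mem_singleton] at this
        tauto
      have hdl : d l = 0 := by
        by_contra h''
        have : l ∈ fsupp d := mem_fsupp.mpr h''
        rw [hds] at this
        simp only [Finset.mem_insert, Finset.mem_singleton] at this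
        tauto
      apply hl
      simp [he, hcl, hdl]
    · intro hl
      rcases hl with rfl | rfl | rfl
      · exact hei
      · exact hej
      · exact hek
  have hwt3 : wt e = 3 := by
    rw [wt_eq_fsupp, hsuppe]
    rw [Finset.card_insert_of_notMem (by simp [hji.symm, hki.symm]), Finset.card_insert_of_notMem (by simp [hjk])]
    simp
  exact hno3 e heC hwt3

lemma scalar_multiple (hno1 : ∀ v ∈ C, wt v ≠ 1)
    {c d : Fin n → F} (hc : c ∈ C) (hd : d ∈ C) (h2c : wt c = 2) (h2d : wt d = 2)
    (hsupp : fsupp c = fsupp d) : ∃ l : F, l ≠ 0 ∧ d = l • c := by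
  rw [wt_eq_fsupp] at h2c h2d
  have hne : (fsupp c).Nonempty := Finset.card_pos.mp (by omega)
  obtain ⟨i, hi⟩ := hne
  have hci : c i ≠ 0 := mem_fsupp.mp hi
  have hdi : d i ≠ 0 := mem_fsupp.mp (hsupp ▸ hi)
  obtain ⟨j, hji, hcs⟩ := pair_mem_of_card_two h2c hi
  refine ⟨d i / c i, div_ne_zero hdi hci, ?_⟩
  set e : Fin n → F := d - (d i / c i) • c with he
  have heC : e ∈ C := C.sub_mem hd (C.smul_mem _ hc)
  have hei : e i = 0 := by
    simp only [he, Pi.sub_apply, Pi.smul_apply, smul_eq_mul]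
    field_simp
    ring
  have hsub : fsupp e ⊆ {j} := by
    intro l hl
    have hel : e l ≠ 0 := mem_fsupp.mp hl
    simp only [Finset.mem_singleton]
    by_contra hlj
    have hli : l ≠ i := by
      intro h'; rw [h'] at hel; exact hel hei
    have hlc : c l = 0 := by
      by_contra h''
      have : l ∈ fsupp c := mem_fsupp.mpr h''
      rw [hcs] at this
      simp only [Finset.mem_insert, Finset.mem_singleton] at this
      tauto
    have hld : d l = 0 := by
      by_contra h''
      have : l ∈ fsupp d := mem_fsupp.mpr h''
      rw [← hsupp, hcs] at this
      simp only [Finset.mem_insert, Finset.mem_singleton] at this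
      tauto
    apply hel
    simp [he, hlc, hld]
  have hwte : wt e ≤ 1 := by
    rw [wt_eq_fsupp]
    exact le_trans (Finset.card_le_card hsub) (by simp)
  have hwt0 : wt e = 0 := by
    have := hno1 e heC
    omega
  have he0 : e = 0 := wt_eq_zero hwt0
  funext l
  have h2 : d l - (d i / c i) * c l = 0 := by
    have := congrFun he0 l
    simpa [he] using this
  simp only [Pi.smul_apply, smul_eq_mul]
  linear_combination h2
end Comb


lemma mem_pairCode {F : Type*} [Field F] {m : ℕ} (w : Fin (2*m) → F) :
    w ∈ pairCode F m ↔ ∀ k : Fin m,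
      w (⟨2 * (k : ℕ), by omega⟩ : Fin (2 * m)) = w (⟨2 * (k : ℕ) + 1, by omega⟩ : Fin (2 * m)) := by
  constructor
  · intro hw
    induction hw using Submodule.span_induction with
    | mem x hx =>
      obtain ⟨k', rfl⟩ := hx
      intro k
      simp only [Pi.add_apply, Pi.single_apply]
      have h1 : ((⟨2 * (k : ℕ), by omega⟩ : Fin (2 * m)) = ⟨2 * (k' : ℕ), by omega⟩) ↔ k = k' := by
        rw [Fin.mk.injEq, Fin.ext_iff]
        omega
      have h2 : ¬((⟨2 * (k : ℕ), by omega⟩ : Fin (2 * m)) = ⟨2 * (k' : ℕ) + 1, by omega⟩) := by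
        rw [Fin.mk.injEq]; omega
      have h3 : ¬((⟨2 * (k : ℕ) + 1, by omega⟩ : Fin (2 * m)) = ⟨2 * (k' : ℕ), by omega⟩) := by
        rw [Fin.mk.injEq]; omega
      have h4 : ((⟨2 * (k : ℕ) + 1, by omega⟩ : Fin (2 * m)) = ⟨2 * (k' : ℕ) + 1, by omega⟩) ↔ k = k' := by
        rw [Fin.mk.injEq, Fin.ext_iff]
        omega
      rw [if_neg h2, if_neg h3]
      by_cases hkk : k = k'
      · rw [if_pos (h1.mpr hkk), if_pos (h4.mpr hkk)]
        ring
      · rw [if_neg (fun h => hkk (h1.mp h)), if_neg (fun h => hkk (h4.mp h))]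
    | zero => intro k; simp
    | add x y hx hy ihx ihy =>
      intro k
      simp only [Pi.add_apply, ihx k, ihy k]
    | smul a x hx ih =>
      intro k
      simp only [Pi.smul_apply, smul_eq_mul, ih k]
  · intro hw
    have hrepr : w = ∑ k : Fin m, w (⟨2 * (k : ℕ), by omega⟩ : Fin (2 * m)) •
        (Pi.single (⟨2 * (k : ℕ), by omega⟩ : Fin (2 * m)) 1 +
          Pi.single (⟨2 * (k : ℕ) + 1, by omega⟩ : Fin (2 * m)) (1 : F)) := by
      funext i
      have hilt := i.isLt
      have hk0lt : i.1 / 2 < m := by omega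
      set k0 : Fin m := ⟨i.1/2, hk0lt⟩ with hk0
      rw [Finset.sum_apply]
      rw [Finset.sum_eq_single k0]
      · simp only [Pi.smul_apply, Pi.add_apply, Pi.single_apply, smul_eq_mul]
        by_cases hpar : i.1 % 2 = 0
        · have hi1 : i = (⟨2 * (k0 : ℕ), by omega⟩ : Fin (2*m)) := by
            rw [Fin.ext_iff]; simp [hk0]; omega
          have hi2 : ¬(i = (⟨2 * (k0 : ℕ) + 1, by omega⟩ : Fin (2*m))) := by
            rw [Fin.ext_iff]; simp [hk0]; omega
          rw [if_pos hi1, if_neg hi2, ← hi1]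
          ring
        · have hi1 : ¬(i = (⟨2 * (k0 : ℕ), by omega⟩ : Fin (2*m))) := by
            rw [Fin.ext_iff]; simp [hk0]; omega
          have hi2 : i = (⟨2 * (k0 : ℕ) + 1, by omega⟩ : Fin (2*m)) := by
            rw [Fin.ext_iff]; simp [hk0]; omega
          rw [if_neg hi1, if_pos hi2]
          have hwi : w i = w (⟨2 * (k0 : ℕ) + 1, by omega⟩ : Fin (2*m)) := by rw [← hi2]
          rw [hwi, zero_add, mul_one]
          exact (hw k0).symm
      · intro k _ hkk
        simp only [Pi.smul_apply, Pi.add_apply, Pi.single_apply, smul_eq_mul]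
        have hi1 : ¬(i = (⟨2 * (k : ℕ), by omega⟩ : Fin (2*m))) := by
          intro h
          apply hkk
          apply Fin.ext
          show (k : ℕ) = (i : ℕ)/2
          have h' : (i:ℕ) = 2*(k:ℕ) := congrArg Fin.val h
          omega
        have hi2 : ¬(i = (⟨2 * (k : ℕ) + 1, by omega⟩ : Fin (2*m))) := by
          intro h
          apply hkk
          apply Fin.ext
          show (k : ℕ) = (i : ℕ)/2
          have h' : (i:ℕ) = 2*(k:ℕ)+1 := congrArg Fin.val h
          omega
        rw [if_neg hi1, if_neg hi2]
        ring
      · intro h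
        exact absurd (Finset.mem_univ k0) h
    rw [hrepr]
    apply Submodule.sum_mem
    intro k _
    apply Submodule.smul_mem
    apply Submodule.subset_span
    exact ⟨k, rfl⟩


lemma rhs_expand (a : ℂ) (m : ℕ) :
    (1 + Polynomial.C a * Polynomial.X ^ 2) ^ m
      = ∑ j ∈ Finset.range (m+1), Polynomial.C (a^j * m.choose j) * Polynomial.X ^ (2*j) := by
  rw [add_comm, add_pow]
  refine Finset.sum_congr rfl fun j hj => ?_
  rw [mul_pow, ← Polynomial.C_pow, ← pow_mul, one_pow, mul_one]
  rw [← Polynomial.C_eq_natCast, Polynomial.C_mul]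
  ring

lemma rhs_coeff (a : ℂ) (m k : ℕ) :
    ((1 + Polynomial.C a * Polynomial.X ^ 2) ^ m).coeff k
      = if k % 2 = 0 ∧ k ≤ 2*m then a^(k/2) * m.choose (k/2) else 0 := by
  rw [rhs_expand]
  rw [Polynomial.finset_sum_coeff]
  simp only [Polynomial.coeff_C_mul, Polynomial.coeff_X_pow]
  by_cases h : k % 2 = 0 ∧ k ≤ 2*m
  · rw [if_pos h]
    rw [Finset.sum_eq_single (k/2)]
    · rw [if_pos (by omega)]; ring
    · intro j hj hne
      rw [if_neg (by simp at hj ⊢; omega), mul_zero]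
    · intro h'; simp at h'; omega
  · rw [if_neg h]
    apply Finset.sum_eq_zero
    intro j hj
    rw [if_neg (by simp at hj ⊢; omega), mul_zero]

lemma sum_pow_coeff {ι : Type*} [Fintype ι] (f : ι → ℕ) (k : ℕ) :
    (∑ i, (Polynomial.X : Polynomial ℂ) ^ (f i)).coeff k
      = (Finset.univ.filter fun i => f i = k).card := by
  rw [Polynomial.finset_sum_coeff]
  simp only [Polynomial.coeff_X_pow]
  have h1 : (∑ x : ι, if k = f x then (1:ℂ) else 0) = ∑ x : ι, if f x = k then 1 else 0 := by
    simp [eq_comm]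
  rw [h1, Finset.sum_boole]

lemma sum_pow_eval_one {ι : Type*} [Fintype ι] (f : ι → ℕ) :
    (∑ i, (Polynomial.X : Polynomial ℂ) ^ (f i)).eval 1 = Fintype.card ι := by
  rw [Polynomial.eval_finset_sum]
  simp only [Polynomial.eval_pow, Polynomial.eval_X, one_pow]
  rw [Finset.sum_const, Finset.card_univ, nsmul_eq_mul, mul_one]

lemma sum_pow_deriv_eval_one {ι : Type*} [Fintype ι] (f : ι → ℕ) :
    (Polynomial.derivative (∑ i, (Polynomial.X : Polynomial ℂ) ^ (f i))).eval 1
      = ∑ i, (f i : ℂ) := by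
  rw [map_sum, Polynomial.eval_finset_sum]
  refine Finset.sum_congr rfl fun i _ => ?_
  simp [Polynomial.derivative_X_pow]

lemma rhs_deriv_eval_one (a : ℂ) (m : ℕ) :
    (Polynomial.derivative ((1 + Polynomial.C a * Polynomial.X ^ 2) ^ m)).eval 1
      = m * (1 + a)^(m-1) * (2*a) := by
  rw [Polynomial.derivative_pow]
  simp only [Polynomial.derivative_add, Polynomial.derivative_one, Polynomial.derivative_C_mul,
    Polynomial.derivative_X_pow, zero_add, Polynomial.eval_mul, Polynomial.eval_pow,
    Polynomial.eval_add, Polynomial.eval_one, Polynomial.eval_C, Polynomial.eval_natCast,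
    Polynomial.eval_X, one_pow, mul_one]
  push_cast
  ring

lemma rhs_eval_one (a : ℂ) (m : ℕ) :
    ((1 + Polynomial.C a * Polynomial.X ^ 2) ^ m).eval 1 = (1 + a)^m := by
  simp

lemma card_fiber_eq {G H : Type*} [AddCommGroup G] [Fintype G] [AddCommGroup H] [Fintype H]
    (φ : G →+ H) (hsurj : Function.Surjective φ) (x : H) :
    (Finset.univ.filter fun c => φ c = x).card = (Finset.univ.filter fun c => φ c = 0).card := by
  obtain ⟨cx, hcx⟩ := hsurj x
  apply Finset.card_bij' (fun c _ => c - cx) (fun c _ => c + cx)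
  · intro c hc
    simp only [Finset.mem_filter, Finset.mem_univ, true_and] at hc ⊢
    simp [map_sub, hc, hcx]
  · intro c hc
    simp only [Finset.mem_filter, Finset.mem_univ, true_and] at hc ⊢
    simp [map_add, hc, hcx]
  · intro c _; simp
  · intro c _; simp

lemma card_ker_mul {G H : Type*} [AddCommGroup G] [Fintype G] [AddCommGroup H] [Fintype H]
    (φ : G →+ H) (hsurj : Function.Surjective φ) :
    Fintype.card G = Fintype.card H * (Finset.univ.filter fun c => φ c = 0).card := by
  have h := Finset.card_eq_sum_card_fiberwise (f := φ) (s := Finset.univ) (t := Finset.univ)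
    (fun x _ => Finset.mem_univ _)
  rw [Finset.card_univ] at h
  rw [h]
  rw [Finset.sum_congr rfl (fun x _ => card_fiber_eq φ hsurj x)]
  simp [Finset.card_univ, mul_comm]

lemma coord_count {G H : Type*} [AddCommGroup G] [Fintype G] [AddCommGroup H] [Fintype H]
    (φ : G →+ H) (hsurj : Function.Surjective φ) :
    Fintype.card H * (Finset.univ.filter fun c => φ c ≠ 0).card
      = (Fintype.card H - 1) * Fintype.card G := by
  have hsplit : (Finset.univ.filter fun c => φ c = 0).card
      + (Finset.univ.filter fun c => φ c ≠ 0).card = Fintype.card G := by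
    rw [← Finset.card_univ]
    exact Finset.card_filter_add_card_filter_not _
  have hk := card_ker_mul φ hsurj
  have hH : 1 ≤ Fintype.card H := Fintype.card_pos
  zify [hH] at hsplit hk ⊢
  linear_combination (Fintype.card H : ℤ) * hsplit + hk

set_option maxHeartbeats 1000000 in
theorem stmt5 {F : Type*} [Field F] [Fintype F] (hq : 2 < Fintype.card F)
    (m : ℕ) (hm : 0 < m) (C : Submodule F (Fin (2 * m) → F))
    (a : ℝ) (ha : a ≠ 0)
    (hW : we (C : Set (Fin (2 * m) → F)) =
      (X 0 ^ 2 + MvPolynomial.C (a : ℂ) * X 1 ^ 2) ^ m) :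
    a = (Fintype.card F : ℝ) - 1 ∧
    ∃ (σ : Equiv.Perm (Fin (2 * m))) (u : Fin (2 * m) → F), (∀ i, u i ≠ 0) ∧
      ∀ v : Fin (2 * m) → F, v ∈ C ↔ (fun i => u i * v (σ i)) ∈ pairCode F m := by
  set q := Fintype.card F with hqdef
  have hq3 : 3 ≤ q := hq
  have hP0 : (∑ c : (C : Set (Fin (2*m) → F)), (Polynomial.X : Polynomial ℂ) ^ (wt c.1))
      = (1 + Polynomial.C (a:ℂ) * Polynomial.X ^ 2) ^ m := by
    have := congrArg (MvPolynomial.aeval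
      (fun j : Fin 2 => if j = 0 then (1:Polynomial ℂ) else Polynomial.X)) hW
    simpa [we, MvPolynomial.aeval_C, Polynomial.algebraMap_eq] using this
  have hP : (∑ c : ↥C, (Polynomial.X : Polynomial ℂ) ^ (wt c.1))
      = (1 + Polynomial.C (a:ℂ) * Polynomial.X ^ 2) ^ m := by
    rw [← hP0]
    exact (Fintype.sum_equiv (Equiv.subtypeEquivRight (fun x => Iff.rfl))
      (fun c => (Polynomial.X : Polynomial ℂ) ^ wt c.1)
      (fun c => (Polynomial.X : Polynomial ℂ) ^ wt c.1) (fun x => rfl)).symm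
  have haC : (a:ℂ) ≠ 0 := by exact_mod_cast ha
  -- weight distribution
  have hA : ∀ k, (((Finset.univ.filter fun c : ↥C => wt c.1 = k).card : ℂ))
      = if k % 2 = 0 ∧ k ≤ 2*m then (a:ℂ)^(k/2) * m.choose (k/2) else 0 := by
    intro k
    have h := rhs_coeff (a:ℂ) m k
    rw [← hP, sum_pow_coeff] at h
    exact h
  -- full weight codeword
  have hfull : ∃ w, w ∈ C ∧ ∀ i, w i ≠ 0 := by
    have h2m := hA (2*m)
    rw [if_pos ⟨by omega, le_refl _⟩] at h2m
    have hmm : 2*m/2 = m := by omega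
    rw [hmm, Nat.choose_self] at h2m
    have hne : (Finset.univ.filter fun c : ↥C => wt c.1 = 2*m).Nonempty := by
      rw [← Finset.card_pos]
      by_contra h
      have h0 : (Finset.univ.filter fun c : ↥C => wt c.1 = 2*m).card = 0 := by omega
      rw [h0] at h2m
      simp only [Nat.cast_zero, Nat.cast_one, mul_one] at h2m
      exact pow_ne_zero m haC h2m.symm
    obtain ⟨c, hc⟩ := hne
    simp only [Finset.mem_filter, Finset.mem_univ, true_and] at hc
    refine ⟨c.1, c.2, fun i => ?_⟩
    have huniv : (Finset.univ.filter fun i : Fin (2*m) => c.1 i ≠ 0) = Finset.univ := by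
      apply Finset.eq_univ_of_card
      rw [← wt]  -- wt is the card of this filter
      rw [hc, Fintype.card_fin]
    have := Finset.eq_univ_iff_forall.mp huniv i
    simpa using this
  -- cardinality
  have hcard : ((Fintype.card ↥C : ℕ) : ℂ) = (1+(a:ℂ))^m := by
    have := congrArg (Polynomial.eval 1) hP
    rw [sum_pow_eval_one, rhs_eval_one] at this
    exact this
  have hCne : Nonempty ↥C := ⟨0⟩
  have h1a : (1:ℂ) + a ≠ 0 := by
    intro h
    rw [h, zero_pow (by omega)] at hcard
    exact_mod_cast Fintype.card_ne_zero (α := ↥C) (by exact_mod_cast hcard)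
  -- sum of weights, analytic side
  have hwsum : (∑ c : ↥C, (wt c.1 : ℂ)) = m * (1+(a:ℂ))^(m-1) * (2*a) := by
    have := congrArg (fun p => Polynomial.eval 1 (Polynomial.derivative p)) hP
    rw [sum_pow_deriv_eval_one, rhs_deriv_eval_one] at this
    exact this
  -- sum of weights, combinatorial side
  have hswap : (∑ c : ↥C, wt c.1)
      = ∑ i : Fin (2*m), (Finset.univ.filter fun c : ↥C => c.1 i ≠ 0).card := by
    simp only [wt, Finset.card_filter]
    rw [Finset.sum_comm]
  have hNi : ∀ i : Fin (2*m),
      q * (Finset.univ.filter fun c : ↥C => c.1 i ≠ 0).card = (q-1) * Fintype.card ↥C := by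
    intro i
    obtain ⟨w, hwC, hw⟩ := hfull
    have hφs : Function.Surjective
        (((LinearMap.proj i).comp C.subtype).toAddMonoidHom) := by
      intro y
      refine ⟨(y * (w i)⁻¹) • ⟨w, hwC⟩, ?_⟩
      simp [LinearMap.proj, mul_assoc, inv_mul_cancel₀ (hw i)]
    exact coord_count _ hφs
  have htot : q * (∑ c : ↥C, wt c.1) = 2*m*((q-1) * Fintype.card ↥C) := by
    rw [hswap, Finset.mul_sum]
    rw [Finset.sum_congr rfl (fun i _ => hNi i)]
    rw [Finset.sum_const, Finset.card_univ, Fintype.card_fin, smul_eq_mul]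
  -- combine
  have hq1 : (1:ℕ) ≤ q := by omega
  have hkey : (q:ℂ) * (m * (1+(a:ℂ))^(m-1) * (2*a)) = 2*m*(((q:ℂ)-1) * (1+(a:ℂ))^m) := by
    have h := congrArg (Nat.cast : ℕ → ℂ) htot
    push_cast [Nat.cast_sub hq1] at h
    rw [hwsum, hcard] at h
    push_cast at h
    exact h
  have hmne : (m:ℂ) ≠ 0 := by exact_mod_cast Nat.pos_iff_ne_zero.mp hm
  have hpne : (1+(a:ℂ))^(m-1) ≠ 0 := pow_ne_zero _ h1a
  have haq : (a:ℂ) = (q:ℂ) - 1 := by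
    have hsplit : (1+(a:ℂ))^m = (1+(a:ℂ))^(m-1) * (1+(a:ℂ)) := by
      rw [← pow_succ]
      congr 1
      omega
    rw [hsplit] at hkey
    have h2 : (2:ℂ) * m * (1+(a:ℂ))^(m-1) ≠ 0 := by
      simp [hmne, hpne]
    have key2 : (q:ℂ) * a = ((q:ℂ)-1)*(1+a) := by
      apply mul_left_cancel₀ h2
      linear_combination hkey
    linear_combination key2
  have haR : a = (q:ℝ) - 1 := by
    have : ((a:ℝ):ℂ) = (((q:ℝ) - 1 : ℝ):ℂ) := by push_cast; exact haq
    exact_mod_cast this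
  refine ⟨haR, ?_⟩
  -- ### Part 2: the monomial equivalence ###
  have hcardN : Fintype.card ↥C = q^m := by
    have h1 : ((Fintype.card ↥C : ℕ) : ℂ) = ((q^m : ℕ) : ℂ) := by
      rw [hcard, haq]
      push_cast
      ring
    exact_mod_cast h1
  have hno1 : ∀ v ∈ C, wt v ≠ 1 := by
    intro v hv hwv
    have h1 := hA 1
    rw [if_neg (by omega)] at h1
    have h0 : (Finset.univ.filter fun c : ↥C => wt c.1 = 1).card = 0 := by exact_mod_cast h1
    have : (⟨v, hv⟩ : ↥C) ∈ Finset.univ.filter fun c : ↥C => wt c.1 = 1 := by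
      simp [hwv]
    rw [Finset.card_eq_zero.mp h0] at this
    simp at this
  have hno3 : ∀ v ∈ C, wt v ≠ 3 := by
    intro v hv hwv
    have h1 := hA 3
    rw [if_neg (by omega)] at h1
    have h0 : (Finset.univ.filter fun c : ↥C => wt c.1 = 3).card = 0 := by exact_mod_cast h1
    have : (⟨v, hv⟩ : ↥C) ∈ Finset.univ.filter fun c : ↥C => wt c.1 = 3 := by
      simp [hwv]
    rw [Finset.card_eq_zero.mp h0] at this
    simp at this
  have hA2 : (Finset.univ.filter fun c : ↥C => wt c.1 = 2).card = m * (q-1) := by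
    have h2 := hA 2
    rw [if_pos ⟨by omega, by omega⟩] at h2
    rw [show (2:ℕ)/2 = 1 from rfl, pow_one, Nat.choose_one_right] at h2
    rw [haq] at h2
    have hcast : ((m * (q-1) : ℕ) : ℂ) = ((q:ℂ) - 1) * m := by
      push_cast [Nat.cast_sub (by omega : 1 ≤ q)]
      ring
    exact_mod_cast h2.trans hcast.symm
  classical
  set W2 : Finset (Fin (2*m) → F) := Finset.univ.filter (fun v => v ∈ C ∧ wt v = 2) with hW2def
  have hmemW2 : ∀ {v}, v ∈ W2 ↔ v ∈ C ∧ wt v = 2 := by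
    intro v; simp [hW2def]
  have hW2card : W2.card = m * (q-1) := by
    rw [← hA2]
    apply Finset.card_bij (fun (v : Fin (2*m) → F) (hv : v ∈ W2) => (⟨v, (hmemW2.mp hv).1⟩ : ↥C))
    · intro v hv
      simp [(hmemW2.mp hv).2]
    · intro v1 h1 v2 h2 heq
      exact congrArg Subtype.val heq
    · intro b hb
      simp only [Finset.mem_filter, Finset.mem_univ, true_and] at hb
      exact ⟨b.1, hmemW2.mpr ⟨b.2, hb⟩, rfl⟩
  have hfiber : ∀ v ∈ W2, (W2.filter fun w => fsupp w = fsupp v).card = q - 1 := by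
    intro v hv
    obtain ⟨hvC, hv2⟩ := hmemW2.mp hv
    have hvsupp : (fsupp v).Nonempty := Finset.card_pos.mp (by rw [← wt_eq_fsupp, hv2]; omega)
    obtain ⟨i, hi⟩ := hvsupp
    have hvi : v i ≠ 0 := mem_fsupp.mp hi
    have hbij : (Finset.univ.erase (0:F)).card = (W2.filter fun w => fsupp w = fsupp v).card := by
      apply Finset.card_bij (fun l _ => l • v)
      · intro l hl
        have hl0 : l ≠ 0 := Finset.ne_of_mem_erase hl
        simp only [Finset.mem_filter]
        refine ⟨hmemW2.mpr ⟨C.smul_mem l hvC, ?_⟩, fsupp_smul hl0⟩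
        rw [wt_eq_fsupp, fsupp_smul hl0, ← wt_eq_fsupp, hv2]
      · intro l1 h1 l2 h2 heq
        have := congrFun heq i
        simp only [Pi.smul_apply, smul_eq_mul] at this
        exact mul_right_cancel₀ hvi this
      · intro w hw
        simp only [Finset.mem_filter] at hw
        obtain ⟨hwW2, hwsupp⟩ := hw
        obtain ⟨hwC, hw2⟩ := hmemW2.mp hwW2
        obtain ⟨l, hl0, hlw⟩ := scalar_multiple hno1 hvC hwC hv2 hw2 hwsupp.symm
        exact ⟨l, Finset.mem_erase.mpr ⟨hl0, Finset.mem_univ l⟩, hlw.symm⟩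
    rw [← hbij, Finset.card_erase_of_mem (Finset.mem_univ 0), Finset.card_univ]
  set Pairs : Finset (Finset (Fin (2*m))) := W2.image fsupp with hPairsdef
  have hPairs2 : ∀ s ∈ Pairs, s.card = 2 := by
    intro s hs
    obtain ⟨v, hv, rfl⟩ := Finset.mem_image.mp hs
    rw [← wt_eq_fsupp]
    exact (hmemW2.mp hv).2
  have hPairsdisj : ∀ s ∈ Pairs, ∀ t ∈ Pairs, s ≠ t → Disjoint s t := by
    intro s hs t ht hst
    obtain ⟨v, hv, rfl⟩ := Finset.mem_image.mp hs
    obtain ⟨w, hw, rfl⟩ := Finset.mem_image.mp ht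
    rcases eq_or_disjoint hq3 hno3 (hmemW2.mp hv).1 (hmemW2.mp hw).1
      (hmemW2.mp hv).2 (hmemW2.mp hw).2 with h | h
    · exact absurd h hst
    · exact h
  have hPairscard : Pairs.card = m := by
    have hsum : ∀ s ∈ Pairs, (W2.filter fun w => fsupp w = s).card = q - 1 := by
      intro s hs
      obtain ⟨v, hv, rfl⟩ := Finset.mem_image.mp hs
      exact hfiber v hv
    have h1 := Finset.card_eq_sum_card_image fsupp W2
    rw [hW2card, ← hPairsdef, Finset.sum_congr rfl hsum, Finset.sum_const, smul_eq_mul] at h1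
    have hq1pos : 0 < q - 1 := by omega
    exact (Nat.eq_of_mul_eq_mul_right hq1pos h1).symm
  have hcover : ∀ i : Fin (2*m), ∃ s ∈ Pairs, i ∈ s := by
    have hbU : Pairs.biUnion (fun x => x) = Finset.univ := by
      apply Finset.eq_univ_of_card
      rw [Finset.card_biUnion hPairsdisj]
      rw [Finset.sum_congr rfl hPairs2, Finset.sum_const, smul_eq_mul, hPairscard,
        Fintype.card_fin]
      ring
    intro i
    have : i ∈ Pairs.biUnion (fun x => x) := by rw [hbU]; exact Finset.mem_univ i
    simpa using Finset.mem_biUnion.mp this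
  have hPairsFin : Fintype.card ↥Pairs = m := by rw [Fintype.card_coe]; exact hPairscard
  set e : Fin m ≃ ↥Pairs := (Fintype.equivFinOfCardEq hPairsFin).symm with hedef
  set s : Fin m → Finset (Fin (2*m)) := fun k => (e k).1 with hsdef
  have hsPairs : ∀ k, s k ∈ Pairs := fun k => (e k).2
  have hsinj : ∀ k k', s k = s k' → k = k' := by
    intro k k' h
    exact e.injective (Subtype.ext h)
  have hsdisj : ∀ k k', k ≠ k' → Disjoint (s k) (s k') := by
    intro k k' hkk
    exact hPairsdisj _ (hsPairs k) _ (hsPairs k') (fun h => hkk (hsinj _ _ h))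
  have hchoose : ∀ k : Fin m, ∃ v, (v ∈ C ∧ wt v = 2) ∧ fsupp v = s k := by
    intro k
    obtain ⟨v, hv, hfv⟩ := Finset.mem_image.mp (hsPairs k)
    exact ⟨v, hmemW2.mp hv, hfv⟩
  choose cf hcf hcfsupp using hchoose
  have hcfC : ∀ k, cf k ∈ C := fun k => (hcf k).1
  have hcf2 : ∀ k, wt (cf k) = 2 := fun k => (hcf k).2
  have hpair : ∀ k : Fin m, ∃ p : Fin (2*m) × Fin (2*m), p.1 ≠ p.2 ∧ s k = {p.1, p.2} := by
    intro k
    obtain ⟨x, y, hxy, hs2⟩ := Finset.card_eq_two.mp (hPairs2 _ (hsPairs k))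
    exact ⟨(x, y), hxy, hs2⟩
  choose p hpne hpeq using hpair
  set I : Fin m → Fin (2*m) := fun k => (p k).1 with hIdef
  set J : Fin m → Fin (2*m) := fun k => (p k).2 with hJdef
  have hIk : ∀ k, I k ∈ s k := fun k => by rw [hpeq k]; simp [hIdef]
  have hJk : ∀ k, J k ∈ s k := fun k => by rw [hpeq k]; simp [hJdef]
  have hIJ : ∀ k, I k ≠ J k := hpne
  have hcfI : ∀ k, cf k (I k) ≠ 0 := fun k => mem_fsupp.mp (by rw [hcfsupp k]; exact hIk k)
  have hcfJ : ∀ k, cf k (J k) ≠ 0 := fun k => mem_fsupp.mp (by rw [hcfsupp k]; exact hJk k)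
  have hcfzero : ∀ k k', k ≠ k' → ∀ i ∈ s k', cf k i = 0 := by
    intro k k' hkk i hi
    by_contra h
    have hmem : i ∈ fsupp (cf k) := mem_fsupp.mpr h
    rw [hcfsupp k] at hmem
    exact Finset.disjoint_left.mp (hsdisj k k' hkk) hmem hi
  have huniq : ∀ i : Fin (2*m), ∃ k, i ∈ s k ∧ ∀ k', i ∈ s k' → k' = k := by
    intro i
    obtain ⟨t, ht, hit⟩ := hcover i
    refine ⟨e.symm ⟨t, ht⟩, ?_, ?_⟩
    · have : s (e.symm ⟨t, ht⟩) = t := by rw [hsdef]; simp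
      rw [this]; exact hit
    · intro k' hk'
      by_contra h
      have hdisj := hsdisj k' (e.symm ⟨t, ht⟩) h
      have hst : s (e.symm ⟨t, ht⟩) = t := by rw [hsdef]; simp
      rw [hst] at hdisj
      exact (Finset.disjoint_left.mp hdisj hk') hit
  choose Kf hKf hKuniq using huniq
  -- the span of the chosen weight-two words is all of C
  set T : (Fin m → F) → (Fin (2*m) → F) := fun lam => ∑ k, lam k • cf k with hTdef
  have hTmem : ∀ lam, T lam ∈ Submodule.span F (Set.range cf) := fun lam =>
    Submodule.sum_mem _ (fun k _ => Submodule.smul_mem _ _ (Submodule.subset_span ⟨k, rfl⟩))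
  have hTeval : ∀ lam (k : Fin m), ∀ i ∈ s k, T lam i = lam k * cf k i := by
    intro lam k i hi
    rw [hTdef]
    simp only
    rw [Finset.sum_apply, Finset.sum_eq_single k]
    · simp
    · intro k' _ hkk
      simp only [Pi.smul_apply, smul_eq_mul]
      rw [hcfzero k' k hkk i hi, mul_zero]
    · intro h; exact absurd (Finset.mem_univ k) h
  have hspanle : Submodule.span F (Set.range cf) ≤ C := by
    rw [Submodule.span_le]
    rintro v ⟨k, rfl⟩
    exact hcfC k
  have hTinj : Function.Injective T := by
    intro l1 l2 h
    funext k
    have h1 := congrFun h (I k)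
    rw [hTeval l1 k _ (hIk k), hTeval l2 k _ (hIk k)] at h1
    exact mul_right_cancel₀ (hcfI k) h1
  have hCspan : ∀ v, v ∈ C → v ∈ Submodule.span F (Set.range cf) := by
    have hcards : Fintype.card ↥(Submodule.span F (Set.range cf)) = Fintype.card ↥C := by
      have hle : Fintype.card ↥(Submodule.span F (Set.range cf)) ≤ Fintype.card ↥C :=
        Fintype.card_le_of_injective (Submodule.inclusion hspanle)
          (Submodule.inclusion_injective hspanle)
      have hge : Fintype.card (Fin m → F) ≤ Fintype.card ↥(Submodule.span F (Set.range cf)) :=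
        Fintype.card_le_of_injective (fun lam => (⟨T lam, hTmem lam⟩ : ↥(Submodule.span F (Set.range cf))))
          (fun l1 l2 hh => hTinj (congrArg Subtype.val hh))
      have hfun : Fintype.card (Fin m → F) = q^m := by
        rw [Fintype.card_fun, Fintype.card_fin]
      omega
    have hbij : Function.Bijective (Submodule.inclusion hspanle) :=
      (Fintype.bijective_iff_injective_and_card _).mpr
        ⟨Submodule.inclusion_injective hspanle, hcards⟩
    intro v hv
    obtain ⟨y, hy⟩ := hbij.2 ⟨v, hv⟩
    have hyv : y.1 = v := congrArg Subtype.val hy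
    rw [← hyv]
    exact y.2
  -- membership characterization of C
  have hQ : ∀ v, v ∈ C ↔ ∀ k : Fin m,
      v (I k) * (cf k (I k))⁻¹ = v (J k) * (cf k (J k))⁻¹ := by
    intro v
    constructor
    · intro hv
      have hvspan : v ∈ Submodule.span F (Set.range cf) := hCspan v hv
      clear hv
      induction hvspan using Submodule.span_induction with
      | mem x hx =>
        obtain ⟨k', rfl⟩ := hx
        intro k
        by_cases hkk : k' = k
        · subst hkk
          rw [mul_inv_cancel₀ (hcfI k'), mul_inv_cancel₀ (hcfJ k')]
        · rw [hcfzero k' k hkk _ (hIk k), hcfzero k' k hkk _ (hJk k)]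
          simp
      | zero => intro k; simp
      | add x y hx hy ihx ihy =>
        intro k
        simp only [Pi.add_apply, add_mul]
        rw [ihx k, ihy k]
      | smul r x hx ih =>
        intro k
        simp only [Pi.smul_apply, smul_eq_mul, mul_assoc]
        rw [ih k]
    · intro hQv
      have hvrepr : v = T (fun k => v (I k) * (cf k (I k))⁻¹) := by
        funext i
        have hki := hKf i
        rw [hTeval _ (Kf i) i hki]
        generalize hgen : Kf i = k at hki ⊢
        have hmem : i ∈ ({I k, J k} : Finset (Fin (2*m))) := by
          rw [← hpeq k]
          exact hki
        simp only [Finset.mem_insert, Finset.mem_singleton] at hmem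
        rcases hmem with hcase | hcase
        · subst hcase
          rw [mul_assoc, inv_mul_cancel₀ (hcfI k), mul_one]
        · subst hcase
          rw [hQv k, mul_assoc, inv_mul_cancel₀ (hcfJ k), mul_one]
      rw [hvrepr]
      exact hspanle (hTmem _)
  -- the permutation
  set g : Fin (2*m) → Fin (2*m) :=
    fun i => if (i:ℕ) % 2 = 0 then I ⟨(i:ℕ)/2, by omega⟩ else J ⟨(i:ℕ)/2, by omega⟩ with hgdef
  have hgmem : ∀ i : Fin (2*m), g i ∈ s (⟨(i:ℕ)/2, by omega⟩ : Fin m) := by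
    intro i
    simp only [hgdef]
    by_cases h : (i:ℕ) % 2 = 0
    · rw [if_pos h]; exact hIk _
    · rw [if_neg h]; exact hJk _
  have hginj : Function.Injective g := by
    intro i i' h
    have h1 := hgmem i
    have h2 : g i ∈ s (⟨(i':ℕ)/2, by omega⟩ : Fin m) := h ▸ hgmem i'
    have e1 := hKuniq (g i) _ h1
    have e2 := hKuniq (g i) _ h2
    have hkk : (⟨(i:ℕ)/2, by omega⟩ : Fin m) = (⟨(i':ℕ)/2, by omega⟩ : Fin m) :=
      e1.trans e2.symm
    have hdiv : (i:ℕ)/2 = (i':ℕ)/2 := congrArg Fin.val hkk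
    by_cases hp : (i:ℕ) % 2 = 0 <;> by_cases hp' : (i':ℕ) % 2 = 0
    · apply Fin.ext; omega
    · exfalso
      simp only [hgdef] at h
      rw [if_pos hp, if_neg hp'] at h
      rw [hkk] at h
      exact hIJ _ h
    · exfalso
      simp only [hgdef] at h
      rw [if_neg hp, if_pos hp'] at h
      rw [hkk] at h
      exact hIJ _ h.symm
    · apply Fin.ext; omega
  have hgbij : Function.Bijective g := Finite.injective_iff_bijective.mp hginj
  have hg0 : ∀ k : Fin m, g (⟨2*(k:ℕ), by omega⟩ : Fin (2*m)) = I k := by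
    intro k
    simp only [hgdef]
    rw [if_pos (show (2*(k:ℕ)) % 2 = 0 by omega)]
    congr 1
    apply Fin.ext
    show (2*(k:ℕ))/2 = (k:ℕ)
    omega
  have hg1 : ∀ k : Fin m, g (⟨2*(k:ℕ)+1, by omega⟩ : Fin (2*m)) = J k := by
    intro k
    simp only [hgdef]
    rw [if_neg (show ¬((2*(k:ℕ)+1) % 2 = 0) by omega)]
    congr 1
    apply Fin.ext
    show (2*(k:ℕ)+1)/2 = (k:ℕ)
    omega
  refine ⟨Equiv.ofBijective g hgbij, fun i => (cf (Kf (g i)) (g i))⁻¹, ?_, ?_⟩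
  · intro i
    apply inv_ne_zero
    apply mem_fsupp.mp
    rw [hcfsupp]
    exact hKf (g i)
  · intro v
    rw [hQ v, mem_pairCode]
    constructor
    · intro hQv k
      show (cf (Kf (g (⟨2*(k:ℕ), by omega⟩ : Fin (2*m)))) (g (⟨2*(k:ℕ), by omega⟩ : Fin (2*m))))⁻¹
          * v (g (⟨2*(k:ℕ), by omega⟩ : Fin (2*m)))
        = (cf (Kf (g (⟨2*(k:ℕ)+1, by omega⟩ : Fin (2*m)))) (g (⟨2*(k:ℕ)+1, by omega⟩ : Fin (2*m))))⁻¹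
          * v (g (⟨2*(k:ℕ)+1, by omega⟩ : Fin (2*m)))
      rw [hg0 k, hg1 k, ← hKuniq (I k) k (hIk k), ← hKuniq (J k) k (hJk k)]
      rw [mul_comm ((cf k (I k))⁻¹) (v (I k)), mul_comm ((cf k (J k))⁻¹) (v (J k))]
      exact hQv k
    · intro hpc k
      have h1 : (cf (Kf (g (⟨2*(k:ℕ), by omega⟩ : Fin (2*m)))) (g (⟨2*(k:ℕ), by omega⟩ : Fin (2*m))))⁻¹
          * v (g (⟨2*(k:ℕ), by omega⟩ : Fin (2*m)))
        = (cf (Kf (g (⟨2*(k:ℕ)+1, by omega⟩ : Fin (2*m)))) (g (⟨2*(k:ℕ)+1, by omega⟩ : Fin (2*m))))⁻¹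
          * v (g (⟨2*(k:ℕ)+1, by omega⟩ : Fin (2*m))) := hpc k
      rw [hg0 k, hg1 k, ← hKuniq (I k) k (hIk k), ← hKuniq (J k) k (hJk k)] at h1
      rw [mul_comm ((cf k (I k))⁻¹) (v (I k)), mul_comm ((cf k (J k))⁻¹) (v (J k))] at h1
      exact h1
end
end
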